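/- Let f ∈ L²(Ω, H) and g ∈ L²(Ω, K) with covariance operators E_ff and E_gf, and suppose E_ff has complete orthonormal eigenvector system (x_α)_{α∈A} with eigenvalues λ_α ≥ 0, where A₊ = {α : λ_α > 0} is countable. Let T† denote the generalized inverse of E_ff. Then E_gf (I − T† E_ff) = 0, equivalently E_gf = E_gf T† E_ff, where T† E_ff is the orthogonal projection onto the closure of span{x_α : α ∈ A₊}. -/

import Mathlib

open MeasureTheory
open scoped InnerProductSpace

/-- If the auto-covariance `E_ff` has a complete orthonormal system of eigenvectors
`(x_α)_{α∈A}` with eigenvalues `λ_α ≥ 0`, where `A₊ = {α : λ_α > 0}` is countable, and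
`T† E_ff` is the orthogonal projection `P : x ↦ Σ_{α∈A₊} ⟨x, x_α⟩ x_α`, then
`E_gf (I − P) = 0`, equivalently `E_gf = E_gf ∘ P`. -/
theorem stmt_19 {Ω : Type*} [MeasurableSpace Ω] (μ : Measure Ω) [IsProbabilityMeasure μ]
    {H : Type*} [NormedAddCommGroup H] [InnerProductSpace ℂ H] [CompleteSpace H]
    {K : Type*} [NormedAddCommGroup K] [InnerProductSpace ℂ K] [CompleteSpace K]
    (f : Ω → H) (hf : MemLp f 2 μ) (g : Ω → K) (hg : MemLp g 2 μ)
    {A : Type*} (b : HilbertBasis A ℂ H) (lam : A → ℝ) (hnn : ∀ α, 0 ≤ lam α)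
    (heig : ∀ α : A, (∫ ω, ⟪f ω, b α⟫_ℂ • f ω ∂μ) = ((lam α : ℝ) : ℂ) • b α)
    (hcount : Countable {α : A // 0 < lam α})
    (P : H → H)
    (hP : ∀ x : H, P x = ∑' α : {α : A // 0 < lam α}, ⟪b α.1, x⟫_ℂ • b α.1) :
    (∀ v : H, (∫ ω, ⟪f ω, v - P v⟫_ℂ • g ω ∂μ) = 0) ∧
    (∀ v : H, (∫ ω, ⟪f ω, v⟫_ℂ • g ω ∂μ) = ∫ ω, ⟪f ω, P v⟫_ℂ • g ω ∂μ) := by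
  -- integrability of ‖f‖²
  have hnsq : Integrable (fun ω => ‖f ω‖ ^ 2) μ := by
    have := hf.integrable_norm_rpow two_ne_zero ENNReal.ofNat_ne_top
    simpa [ENNReal.toReal_ofNat, Real.rpow_natCast] using this
  -- zero eigenvalue ⇒ coefficient of f vanishes a.e.
  have hzero : ∀ α : A, lam α = 0 → ∀ᵐ ω ∂μ, ⟪b α, f ω⟫_ℂ = 0 := by
    intro α hα
    have hb1 : ‖b α‖ = 1 := b.orthonormal.1 α
    have hmeas : AEStronglyMeasurable (fun ω => ⟪f ω, b α⟫_ℂ • f ω) μ :=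
      (hf.aestronglyMeasurable.inner aestronglyMeasurable_const).smul hf.aestronglyMeasurable
    have hintF : Integrable (fun ω => ⟪f ω, b α⟫_ℂ • f ω) μ := by
      refine hnsq.mono' hmeas ?_
      filter_upwards with ω
      rw [norm_smul]
      calc ‖⟪f ω, b α⟫_ℂ‖ * ‖f ω‖ ≤ (‖f ω‖ * ‖b α‖) * ‖f ω‖ := by
            gcongr; exact norm_inner_le_norm _ _
        _ = ‖f ω‖ ^ 2 := by rw [hb1]; ring
    have h2 : ⟪b α, (∫ ω, ⟪f ω, b α⟫_ℂ • f ω ∂μ)⟫_ℂ = 0 := by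
      rw [heig α, hα]; simp
    have hint0 : (∫ ω, ⟪b α, ⟪f ω, b α⟫_ℂ • f ω⟫_ℂ ∂μ) = 0 :=
      ((integral_inner (𝕜 := ℂ) hintF (b α)).trans h2)
    have heq : ∀ ω, ⟪b α, ⟪f ω, b α⟫_ℂ • f ω⟫_ℂ = ((‖⟪b α, f ω⟫_ℂ‖ ^ 2 : ℝ) : ℂ) := by
      intro ω
      rw [inner_smul_right,
        show ⟪f ω, b α⟫_ℂ = (starRingEnd ℂ) ⟪b α, f ω⟫_ℂ from (inner_conj_symm (f ω) (b α)).symm,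
        RCLike.conj_mul]
      norm_cast
    rw [show (fun ω => ⟪b α, ⟪f ω, b α⟫_ℂ • f ω⟫_ℂ) = fun ω => ((‖⟪b α, f ω⟫_ℂ‖ ^ 2 : ℝ) : ℂ)
        from funext heq] at hint0
    have hintsq : Integrable (fun ω => ‖⟪b α, f ω⟫_ℂ‖ ^ 2) μ := by
      refine hnsq.mono' ?_ ?_
      · exact ((aestronglyMeasurable_const.inner hf.aestronglyMeasurable).norm.pow 2)
      · filter_upwards with ω
        rw [Real.norm_eq_abs, abs_of_nonneg (by positivity)]
        calc ‖⟪b α, f ω⟫_ℂ‖ ^ 2 ≤ (‖b α‖ * ‖f ω‖) ^ 2 := by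
              gcongr; exact norm_inner_le_norm _ _
          _ = ‖f ω‖ ^ 2 := by rw [hb1]; ring
    have hint0' : (∫ ω, ‖⟪b α, f ω⟫_ℂ‖ ^ 2 ∂μ) = 0 := by
      have hre := integral_re (𝕜 := ℂ) (hintsq.ofReal (𝕜 := ℂ))
      simp only [RCLike.ofReal_re] at hre
      rw [hre]
      exact congrArg Complex.re hint0
    have := (integral_eq_zero_iff_of_nonneg (fun ω => by positivity) hintsq).mp hint0'
    filter_upwards [this] with ω hω
    simpa using hω
  -- main pointwise claim
  have key : ∀ v : H, ∀ᵐ ω ∂μ, ⟪f ω, v - P v⟫_ℂ = 0 := by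
    classical
    intro v
    set w := v - P v with hw
    -- summability of projected series
    have hsum : Summable (fun β : {α : A // 0 < lam α} => ⟪b β.1, v⟫_ℂ • b β.1) := by
      have h1 := (b.hasSum_repr v).summable
      simp_rw [b.repr_apply_apply] at h1
      exact h1.subtype {α | 0 < lam α}
    -- coefficients of w vanish at positive eigenvalues
    have hcoef : ∀ α : A, 0 < lam α → ⟪b α, w⟫_ℂ = 0 := by
      intro α hα
      have hbo : ∀ i j : A, ⟪b i, b j⟫_ℂ = if i = j then 1 else 0 := fun i j =>
        orthonormal_iff_ite.mp b.orthonormal i j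
      have hPv : ⟪b α, P v⟫_ℂ = ⟪b α, v⟫_ℂ := by
        classical
        calc ⟪b α, P v⟫_ℂ = (innerSL ℂ (b α)) (∑' β : {α : A // 0 < lam α}, ⟪b β.1, v⟫_ℂ • b β.1) := by
              rw [hP v]; rfl
          _ = ∑' β : {α : A // 0 < lam α}, (innerSL ℂ (b α)) (⟪b β.1, v⟫_ℂ • b β.1) :=
              (innerSL ℂ (b α)).map_tsum hsum
          _ = ⟪b α, v⟫_ℂ := by
              rw [tsum_eq_single (⟨α, hα⟩ : {α : A // 0 < lam α})]
              · simp [inner_smul_right, hbo, b.orthonormal.1 α]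
              · intro β hβ
                have hne : α ≠ β.1 := fun h => hβ (Subtype.ext h.symm)
                simp [inner_smul_right, hbo, hne]
      rw [hw, inner_sub_right, hPv, sub_self]
    -- countable support of repr w
    have hSc : (Function.support fun α => (b.repr w) α).Countable := by
      have hsum2 : Summable (fun α => ‖(b.repr w) α‖ ^ (2 : ℝ)) :=
        (lp.memℓp (b.repr w)).summable (by norm_num)
      refine hsum2.countable_support.mono ?_
      intro α hα
      simp only [Function.mem_support] at hα ⊢
      exact ne_of_gt (Real.rpow_pos_of_pos (norm_pos_iff.mpr hα) _)
    set S : Set A := (Function.support fun α => (b.repr w) α) ∩ {α | lam α = 0} with hS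
    have hSc' : S.Countable := hSc.mono Set.inter_subset_left
    have hae : ∀ᵐ ω ∂μ, ∀ α ∈ S, ⟪b α, f ω⟫_ℂ = 0 :=
      (ae_ball_iff hSc').2 fun α hα => hzero α hα.2
    filter_upwards [hae] with ω hω
    rw [← inner_conj_symm, ← b.tsum_inner_mul_inner w (f ω)]
    have hterm0 : ∀ α : A, ⟪w, b α⟫_ℂ * ⟪b α, f ω⟫_ℂ = 0 := by
      intro α
      by_cases hα : 0 < lam α
      · rw [← inner_conj_symm, hcoef α hα, map_zero, zero_mul]
      · have hα0 : lam α = 0 := le_antisymm (not_lt.mp hα) (hnn α)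
        by_cases hwα : ⟪b α, w⟫_ℂ = 0
        · rw [← inner_conj_symm, hwα, map_zero, zero_mul]
        · have : α ∈ S := ⟨by simpa [Function.mem_support, b.repr_apply_apply] using hwα, hα0⟩
          rw [hω α this, mul_zero]
    rw [show (fun α => ⟪w, b α⟫_ℂ * ⟪b α, f ω⟫_ℂ) = fun _ => (0 : ℂ) from funext hterm0,
      tsum_zero, map_zero]
  constructor
  · intro v
    refine integral_eq_zero_of_ae ?_
    filter_upwards [key v] with ω hω
    rw [hω, zero_smul]; rfl
  · intro v
    refine integral_congr_ae ?_
    filter_upwards [key v] with ω hω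
    rw [inner_sub_right, sub_eq_zero] at hω
    rw [hω]
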